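/- Let K be a number field with ring of integers O_K, and let v be a non-archimedean place of K. Given α_1, …, α_n ∈ K, there exists β ∈ O_K such that β·α_i ∈ O_K for all i, and |β|_v = max{1, |α_1|_v, …, |α_n|_v}^{-1}. -/

import Mathlib

open NumberField IsDedekindDomain

open scoped Classical nonZeroDivisors Multiplicative WithZero

/-- Let `K` be a number field, `𝓞 K` its ring of integers, and `v` a
non-archimedean place of `K` (a height-one prime of `𝓞 K` with its `v`-adic valuation).
Given `α₁, …, α_n ∈ K`, there is `β ∈ 𝓞 K` with `β·αᵢ ∈ 𝓞 K` for all `i` and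
`|β|_v = max{1, |α₁|_v, …, |α_n|_v}⁻¹`. -/
theorem stmt8 (K : Type*) [Field K] [NumberField K] (n : ℕ) (α : Fin n → K)
    (v : HeightOneSpectrum (𝓞 K)) :
    ∃ β : 𝓞 K, (∀ i, ∃ γ : 𝓞 K, (β : K) * α i = (γ : K)) ∧
      v.valuation K (β : K) =
        ((Finset.univ.sup fun i => v.valuation K (α i)) ⊔ 1)⁻¹ := by
  set R := 𝓞 K
  -- common denominator d
  obtain ⟨d, hd⟩ := IsLocalization.exist_integer_multiples (R⁰) (Finset.univ) α
  choose a ha using fun i => hd i (Finset.mem_univ i)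
  have hd0 : (d : R) ≠ 0 := nonZeroDivisors.coe_ne_zero d
  have ha' : ∀ i, (algebraMap R K (a i)) = algebraMap R K (d : R) * α i := by
    intro i
    rw [ha i, Algebra.smul_def]
  set D : Ideal R := Ideal.span {(d : R)} with hDdef
  have hD : D ≠ 0 := by
    simp [hDdef, Ideal.span_singleton_eq_bot, hd0]
  -- the target valuation
  set M : ℤᵐ⁰ := (Finset.univ.sup fun i => v.valuation K (α i)) ⊔ 1 with hMdef
  have hM1 : (1 : ℤᵐ⁰) ≤ M := le_sup_right
  have hM0 : M ≠ 0 := fun h => by simp [h] at hM1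
  obtain ⟨u, hu⟩ := WithZero.ne_zero_iff_exists.mp hM0
  have hu0 : (0 : ℤ) ≤ Multiplicative.toAdd u := by
    have : (1 : ℤᵐ⁰) ≤ (u : ℤᵐ⁰) := by rw [hu]; exact hM1
    rwa [← WithZero.coe_one, WithZero.coe_le_coe, ← Multiplicative.toAdd_le, toAdd_one] at this
  set m : ℕ := (Multiplicative.toAdd u).toNat with hmdef
  have hm : (m : ℤ) = Multiplicative.toAdd u := Int.toNat_of_nonneg hu0
  have hMm : M = ((Multiplicative.ofAdd ((m : ℤ)) : Multiplicative ℤ) : ℤᵐ⁰) := by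
    rw [← hu, hm]; norm_cast
  have hMalpha : ∀ i, v.valuation K (α i) ≤ ((Multiplicative.ofAdd ((m : ℤ)) : Multiplicative ℤ) : ℤᵐ⁰) := by
    intro i
    rw [← hMm, hMdef]
    exact le_sup_of_le_left (Finset.le_sup (f := fun i => v.valuation K (α i)) (Finset.mem_univ i))
  -- counts
  set c : HeightOneSpectrum R → ℕ :=
    fun w => (Associates.mk w.asIdeal).count (Associates.mk D).factors with hcdef
  have hvd : v.intValuation (d : R) = ((Multiplicative.ofAdd (-(c v : ℤ)) : Multiplicative ℤ) : ℤᵐ⁰) := by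
    rw [IsDedekindDomain.HeightOneSpectrum.intValuation_apply,
      v.intValuationDef_if_neg hd0]; rfl
  -- the finite set of primes
  set S₀ : Finset (HeightOneSpectrum R) := (show (Function.mulSupport fun w : HeightOneSpectrum R => w.maxPowDividing D).Finite from
    Ideal.finite_mulSupport hD).toFinset with hS₀def
  set S : Finset (HeightOneSpectrum R) := insert v S₀ with hSdef
  have hprod : (∏ w ∈ S, w.maxPowDividing D) = D := by
    refine Eq.trans ?_ (Ideal.finprod_heightOneSpectrum_factorization hD)
    refine (finprod_eq_finset_prod_of_mulSupport_subset _ ?_).symm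
    intro w hw
    simp only [hSdef, Finset.coe_insert, Set.mem_insert_iff]
    right
    rw [hS₀def, Set.Finite.coe_toFinset]
    exact hw
  -- uniformizer
  obtain ⟨π, hπ⟩ := v.intValuation_exists_uniformizer
  -- CRT
  obtain ⟨y, hy⟩ := IsDedekindDomain.exists_forall_sub_mem_ideal (R := R) (s := S)
    (fun w => w.asIdeal) (fun w => if w = v then m + 1 else c w)
    (fun w _ => w.prime)
    (fun w _ w' _ hne h => hne (IsDedekindDomain.HeightOneSpectrum.ext h))
    (fun w => if (w : HeightOneSpectrum R) = v then π ^ m else 0)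
  have hyv : y - π ^ m ∈ v.asIdeal ^ (m + 1) := by
    have := hy v (Finset.mem_insert_self v S₀)
    simpa using this
  -- exact valuation of y at v
  have hπm : v.intValuation (π ^ m) = ((Multiplicative.ofAdd (-(m : ℤ)) : Multiplicative ℤ) : ℤᵐ⁰) := by
    rw [map_pow, hπ, WithZero.exp_eq_coe_ofAdd]
    rw [← WithZero.coe_pow, WithZero.coe_inj, ← ofAdd_nsmul]
    congr 1
    simp
  have hsub : v.intValuation (y - π ^ m) ≤
      ((Multiplicative.ofAdd (-((m + 1 : ℕ) : ℤ)) : Multiplicative ℤ) : ℤᵐ⁰) := by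
    rw [IsDedekindDomain.HeightOneSpectrum.intValuation_apply]
    exact (v.intValuation_le_pow_iff_dvd _ _).mpr (Ideal.dvd_span_singleton.mpr hyv)
  have hlt : v.intValuation (y - π ^ m) < v.intValuation (π ^ m) := by
    rw [hπm]
    refine lt_of_le_of_lt hsub ?_
    rw [WithZero.coe_lt_coe, Multiplicative.ofAdd_lt]
    push_cast
    omega
  have hyval : v.intValuation y = ((Multiplicative.ofAdd (-(m : ℤ)) : Multiplicative ℤ) : ℤᵐ⁰) := by
    have hyeq : y = (y - π ^ m) + π ^ m := by ring
    rw [hyeq, Valuation.map_add_eq_of_lt_right _ hlt, hπm]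
  -- integrality
  refine ⟨y, ?_, ?_⟩
  · intro i
    have key : D ∣ Ideal.span {y * a i} := by
      rw [← hprod]
      refine Finset.prod_dvd_of_coprime ?_ ?_
      · intro w hw w' hw' hne
        simp only [Function.onFun, IsDedekindDomain.HeightOneSpectrum.maxPowDividing]
        exact IsCoprime.pow
          (Ideal.isCoprime_iff_sup_eq.mpr (Ideal.IsMaximal.coprime_of_ne w.isMaximal w'.isMaximal
            (fun h => hne (IsDedekindDomain.HeightOneSpectrum.ext h))))
      · intro w hw
        rw [IsDedekindDomain.HeightOneSpectrum.maxPowDividing]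
        by_cases hwv : w = v
        · subst hwv
          refine (w.intValuation_le_pow_iff_dvd _ _).mp ?_
          by_cases hai : a i = 0
          · rw [hai, mul_zero, map_zero]
            exact zero_le'
          · have hval_a : w.intValuation (a i) =
                w.intValuation (d : R) * w.valuation K (α i) := by
              have := congrArg (w.valuation K) (ha' i)
              rwa [IsDedekindDomain.HeightOneSpectrum.valuation_of_algebraMap, map_mul,
                IsDedekindDomain.HeightOneSpectrum.valuation_of_algebraMap] at this
            rw [map_mul, hyval, hval_a, hvd]
            calc ((Multiplicative.ofAdd (-(m : ℤ)) : Multiplicative ℤ) : ℤᵐ⁰) *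
                (((Multiplicative.ofAdd (-(c w : ℤ)) : Multiplicative ℤ) : ℤᵐ⁰) * w.valuation K (α i))
                ≤ ((Multiplicative.ofAdd (-(m : ℤ)) : Multiplicative ℤ) : ℤᵐ⁰) *
                  (((Multiplicative.ofAdd (-(c w : ℤ)) : Multiplicative ℤ) : ℤᵐ⁰) *
                    ((Multiplicative.ofAdd ((m : ℤ)) : Multiplicative ℤ) : ℤᵐ⁰)) := by
                  exact mul_le_mul_right (mul_le_mul_right (hMalpha i) _) _
              _ = ((Multiplicative.ofAdd (-(c w : ℤ)) : Multiplicative ℤ) : ℤᵐ⁰) := by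
                  rw [← WithZero.coe_mul, ← WithZero.coe_mul, WithZero.coe_inj]
                  rw [← ofAdd_add, ← ofAdd_add]
                  congr 1
                  ring
        · have hyw : y ∈ w.asIdeal ^ (c w) := by
            have := hy w hw
            simpa [hwv] using this
          exact Ideal.dvd_span_singleton.mpr (Ideal.mul_mem_right _ _ hyw)
    have hmem : y * a i ∈ D := by
      have hle := Ideal.le_of_dvd key
      exact hle (Ideal.mem_span_singleton_self _)
    obtain ⟨γ, hγ⟩ := Ideal.mem_span_singleton.mp hmem
    refine ⟨γ, ?_⟩
    have hinj : Function.Injective (algebraMap R K) := IsFractionRing.injective R K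
    have hdK : algebraMap R K (d : R) ≠ 0 := fun h =>
      hd0 (hinj (by rw [h, map_zero]))
    apply mul_left_cancel₀ hdK
    have : algebraMap R K (y * a i) = algebraMap R K ((d : R) * γ) := by rw [hγ]
    rw [map_mul, map_mul, ha' i] at this
    rw [RingOfIntegers.coe_eq_algebraMap, RingOfIntegers.coe_eq_algebraMap]
    calc algebraMap R K (d : R) * (algebraMap R K y * α i)
        = algebraMap R K y * (algebraMap R K (d : R) * α i) := by ring
      _ = algebraMap R K (d : R) * algebraMap R K γ := this
  · rw [RingOfIntegers.coe_eq_algebraMap,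
      IsDedekindDomain.HeightOneSpectrum.valuation_of_algebraMap, hyval, hMm]
    rw [← WithZero.coe_inv, WithZero.coe_inj, ← ofAdd_neg]
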